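/- If r is rational and cos(rπ) is rational, then cos(rπ) ∈ {0, 1, -1, 1/2, -1/2}. -/

import Mathlib

open Real

lemma niven_aux_integral (θ : ℝ) (d : ℕ) (hd : 0 < d)
    (hpow : Complex.exp (θ * Complex.I) ^ d = 1) :
    IsIntegral ℤ ((2 * Real.cos θ : ℝ) : ℂ) := by
  have hζ : IsIntegral ℤ (Complex.exp (θ * Complex.I)) := by
    refine ⟨Polynomial.X ^ d - Polynomial.C 1, ?_, ?_⟩
    · exact Polynomial.monic_X_pow_sub_C 1 hd.ne'
    · simp [Polynomial.eval₂, hpow]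
  have hζ' : IsIntegral ℤ (Complex.exp (-θ * Complex.I)) := by
    refine ⟨Polynomial.X ^ d - Polynomial.C 1, ?_, ?_⟩
    · exact Polynomial.monic_X_pow_sub_C 1 hd.ne'
    · have : Complex.exp (-θ * Complex.I) ^ d = 1 := by
        have : Complex.exp (-θ * Complex.I) = (Complex.exp (θ * Complex.I))⁻¹ := by
          rw [← Complex.exp_neg]; ring_nf
        rw [this, inv_pow, hpow, inv_one]
      have h2 : Complex.exp (-(θ * Complex.I)) ^ d = 1 := by
        rw [neg_mul] at this; exact this
      simp [Polynomial.eval₂, h2]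
  have := hζ.add hζ'
  convert this using 1
  · rfl
  have : ((Real.cos θ : ℝ) : ℂ) = Complex.cos θ := Complex.ofReal_cos θ
  rw [Complex.ofReal_mul, this, Complex.cos]
  push_cast
  ring

namespace Niven

theorem niven (r : ℚ) (h : ∃ q : ℚ, Real.cos (r * π) = q) :
    Real.cos (r * π) ∈ ({0, 1, -1, 1/2, -1/2} : Set ℝ) := by
  obtain ⟨q, hq⟩ := h
  set θ : ℝ := (r : ℝ) * π with hθ
  have hpow : Complex.exp (θ * Complex.I) ^ (2 * r.den) = 1 := by
    rw [← Complex.exp_nat_mul]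
    have : ((2 * r.den : ℕ) : ℂ) * (θ * Complex.I) = (r.num : ℤ) * (2 * π * Complex.I) := by
      have hden : (r.den : ℝ) * (r : ℝ) = (r.num : ℝ) := by
        rw [Rat.cast_def]
        field_simp
      push_cast
      rw [hθ]
      push_cast
      have : (r.den : ℂ) * (r : ℂ) = (r.num : ℂ) := by
        exact_mod_cast congrArg (Complex.ofReal ·) hden
      linear_combination (2 * π * Complex.I) * this
    rw [this, Complex.exp_int_mul_two_pi_mul_I]
  have hint : IsIntegral ℤ ((2 * Real.cos θ : ℝ) : ℂ) :=
    niven_aux_integral θ (2 * r.den) (by positivity) hpow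
  -- 2 cos θ = 2q as a rational
  have h2q : ((2 * q : ℚ) : ℂ) = ((2 * Real.cos θ : ℝ) : ℂ) := by
    push_cast [hq]
    ring
  rw [← h2q] at hint
  have hintq : IsIntegral ℤ (2 * q : ℚ) := by
    have : ((2 * q : ℚ) : ℂ) = algebraMap ℚ ℂ (2 * q) := rfl
    rw [this] at hint
    exact (isIntegral_algebraMap_iff (algebraMap ℚ ℂ).injective).mp hint
  obtain ⟨n, hn⟩ := IsIntegrallyClosed.isIntegral_iff.mp hintq
  have hn' : (n : ℚ) = 2 * q := by rw [← hn]; simp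
  have hcosb : |Real.cos θ| ≤ 1 := Real.abs_cos_le_one θ
  have hqn : Real.cos θ = (n : ℝ) / 2 := by
    rw [hq]
    have : ((n : ℚ) : ℝ) = ((2 * q : ℚ) : ℝ) := by rw [hn']
    push_cast at this
    linarith
  have hnb : |(n : ℝ)| ≤ 2 := by
    rw [hqn, abs_div] at hcosb
    have h2 : |(2:ℝ)| = 2 := by norm_num
    rw [h2, div_le_one (by norm_num : (0:ℝ) < 2)] at hcosb
    linarith
  have : n = -2 ∨ n = -1 ∨ n = 0 ∨ n = 1 ∨ n = 2 := by
    have h2 : |n| ≤ 2 := by exact_mod_cast hnb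
    rw [abs_le] at h2; omega
  rcases this with h | h | h | h | h <;>
    simp [hqn, h, Set.mem_insert_iff]
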